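/- Let l ≥ 2 and let (b_1,…,b_l), (c_1,…,c_l) be strictly increasing sequences of positive integers. Then ∑_{d ≥ b, d ∈ S_l} [c; d] (1-t)^{∑(d_i - b_i)} = ∑_{d ≤ c, d ∈ S_l} [d; b] (1-t)^{∑(c_i - d_i)}, where both sums are over strictly increasing sequences d = (d_1,…,d_l), and moreover both sides equal ∏_{i=2}^{l} (1-t)^{max(0, c_{i-1} - b_i + 1)} when b ≤ c componentwise. -/

import Mathlib

open Polynomial Finset

/-- Bracket symbol: `t` if `c > b`, `1` if `c = b`, `0` if `c < b` (here `t = X ∈ ℚ[t]`). -/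
noncomputable def brk (c b : ℕ) : Polynomial ℚ :=
  if b < c then X else if c = b then 1 else 0

/-- Tuple bracket: `0` if `c i ≥ b (i+1)` for some `i < l`, and `∏ᵢ [cᵢ, bᵢ]` otherwise. -/
noncomputable def brkT {l : ℕ} (c b : Fin l → ℕ) : Polynomial ℚ :=
  if ∀ i : Fin l, ∀ h : (i : ℕ) + 1 < l, c i < b ⟨(i : ℕ) + 1, h⟩ then
    ∏ i, brk (c i) (b i)
  else 0

lemma keyL : ∀ (k b a c : ℕ), a + k = c → b ≤ a →
    ∑ x ∈ Finset.Icc a c, brk c x * (1 - X : Polynomial ℚ) ^ (x - b) = (1 - X) ^ (a - b) := by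
  intro k
  induction k with
  | zero =>
    intro b a c hk hb
    have : a = c := by omega
    subst this
    rw [Finset.Icc_self, Finset.sum_singleton, brk, if_neg (lt_irrefl _), if_pos rfl, one_mul]
  | succ k ih =>
    intro b a c hk hb
    have hac : a < c := by omega
    rw [Finset.Icc_eq_cons_Ioc (le_of_lt hac), Finset.sum_cons, ← Finset.Icc_add_one_left_eq_Ioc,
        ih b (a+1) c (by omega) (by omega)]
    have h1 : brk c a = X := by rw [brk, if_pos hac]
    have h2 : a + 1 - b = (a - b) + 1 := by omega
    rw [h1, h2, pow_succ]
    ring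

lemma keyR (b c : ℕ) : ∀ u, b ≤ u → u ≤ c →
    ∑ x ∈ Finset.Icc b u, brk x b * (1 - X : Polynomial ℚ) ^ (c - x) = (1 - X) ^ (c - u) := by
  intro u hbu
  induction u, hbu using Nat.le_induction with
  | base =>
    intro _
    rw [Finset.Icc_self, Finset.sum_singleton, brk, if_neg (lt_irrefl _), if_pos rfl, one_mul]
  | succ u hu ih =>
    intro h
    rw [Finset.sum_Icc_succ_top (by omega), ih (by omega)]
    have h1 : brk (u+1) b = X := by rw [brk, if_pos (by omega)]
    have h2 : c - u = (c - (u+1)) + 1 := by omega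
    rw [h1, h2, pow_succ]
    ring

lemma brkT_succ {m : ℕ} (c b : Fin (m+2) → ℕ) :
    brkT c b = if ∀ j : Fin (m+1), c j.castSucc < b j.succ then ∏ i, brk (c i) (b i) else 0 := by
  have hiff : (∀ i : Fin (m+2), ∀ h : (i:ℕ)+1 < m+2, c i < b ⟨(i:ℕ)+1, h⟩) ↔
      ∀ j : Fin (m+1), c j.castSucc < b j.succ := by
    constructor
    · intro H j
      have hj := j.isLt
      have h : ((j.castSucc : Fin (m+2)) : ℕ) + 1 < m + 2 := by
        simp only [Fin.coe_castSucc]; omega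
      have := H j.castSucc h
      have he : (⟨((j.castSucc : Fin (m+2)) : ℕ)+1, h⟩ : Fin (m+2)) = j.succ := by
        apply Fin.ext; simp
      rwa [he] at this
    · intro H i h
      have hi : (i:ℕ) < m+1 := by omega
      have := H ⟨i, hi⟩
      have h1 : (⟨(i:ℕ), hi⟩ : Fin (m+1)).castSucc = i := by apply Fin.ext; simp
      have h2 : (⟨(i:ℕ), hi⟩ : Fin (m+1)).succ = ⟨(i:ℕ)+1, h⟩ := by apply Fin.ext; simp
      rwa [h1, h2] at this
  rw [brkT, if_congr hiff rfl rfl]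

lemma brkT_eq_zero_of {l : ℕ} (c b : Fin l → ℕ) (i : Fin l) (h : c i < b i) :
    brkT c b = 0 := by
  rw [brkT]
  split
  · exact Finset.prod_eq_zero (Finset.mem_univ i)
      (by rw [brk, if_neg (by omega), if_neg (by omega)])
  · rfl

lemma partA (m : ℕ) (b c : Fin (m + 2) → ℕ) (hb : StrictMono b) (hc : StrictMono c)
    (hbc : ∀ i, b i ≤ c i) :
    (∑ d ∈ (Finset.Icc b c).filter (fun d => ∀ i j, i < j → d i < d j),
        brkT c d * (1 - X) ^ (∑ i, (d i - b i))) =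
      ∏ i : Fin (m + 1), (1 - X) ^ (c i.castSucc + 1 - b i.succ) := by
  set a : Fin (m+2) → ℕ := Fin.cases (b 0) (fun j => max (b j.succ) (c j.castSucc + 1)) with ha
  have ha0 : a 0 = b 0 := by simp [ha]
  have has : ∀ j : Fin (m+1), a j.succ = max (b j.succ) (c j.castSucc + 1) := by
    intro j; simp [ha]
  have hba : ∀ i, b i ≤ a i := by
    intro i
    induction i using Fin.cases with
    | zero => rw [ha0]
    | succ j => rw [has]; exact le_max_left _ _
  have hac : ∀ i, a i ≤ c i := by
    intro i
    induction i using Fin.cases with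
    | zero => rw [ha0]; exact hbc 0
    | succ j =>
      rw [has]
      have := hc (Fin.castSucc_lt_succ : j.castSucc < j.succ)
      have := hbc j.succ
      omega
  have hsub : Fintype.piFinset (fun i => Finset.Icc (a i) (c i)) ⊆
      (Finset.Icc b c).filter (fun d => ∀ i j, i < j → d i < d j) := by
    intro d hd
    rw [Fintype.mem_piFinset] at hd
    have hd' : ∀ i, a i ≤ d i ∧ d i ≤ c i := fun i => Finset.mem_Icc.mp (hd i)
    rw [Finset.mem_filter, Finset.mem_Icc]
    refine ⟨⟨fun i => le_trans (hba i) (hd' i).1, fun i => (hd' i).2⟩, ?_⟩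
    have hmono : StrictMono d := by
      rw [Fin.strictMono_iff_lt_succ]
      intro j
      have h1 : d j.castSucc ≤ c j.castSucc := (hd' _).2
      have h2 : c j.castSucc + 1 ≤ a j.succ := by rw [has]; omega
      have h3 := (hd' j.succ).1
      omega
    exact fun i j h => hmono h
  have hvan : ∀ d ∈ (Finset.Icc b c).filter (fun d => ∀ i j, i < j → d i < d j),
      d ∉ Fintype.piFinset (fun i => Finset.Icc (a i) (c i)) →
      brkT c d * (1 - X : Polynomial ℚ) ^ (∑ i, (d i - b i)) = 0 := by
    intro d hd hnd
    rw [Finset.mem_filter, Finset.mem_Icc] at hd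
    have hbd : ∀ i, b i ≤ d i := hd.1.1
    have hdc : ∀ i, d i ≤ c i := hd.1.2
    rw [Fintype.mem_piFinset] at hnd
    push_neg at hnd
    obtain ⟨i, hi⟩ := hnd
    rw [Finset.mem_Icc] at hi
    have hlt : d i < a i := by
      by_contra h
      push_neg at h
      exact hi ⟨h, hdc i⟩
    have hzero : brkT c d = 0 := by
      rcases Fin.eq_zero_or_eq_succ i with h0 | ⟨j, hj⟩
      · subst h0
        have h1 := hbd 0
        rw [ha0] at hlt
        omega
      · subst hj
        have hax := has j
        have hbj := hbd j.succ
        have hdcj := hdc j.succ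
        rw [brkT_succ, if_neg]
        push_neg
        exact ⟨j, by omega⟩
    rw [hzero, zero_mul]
  rw [← Finset.sum_subset hsub hvan]
  have hterm : ∀ d ∈ Fintype.piFinset (fun i => Finset.Icc (a i) (c i)),
      brkT c d * (1 - X : Polynomial ℚ) ^ (∑ i, (d i - b i)) =
      ∏ i, (brk (c i) (d i) * (1 - X) ^ (d i - b i)) := by
    intro d hd
    rw [Fintype.mem_piFinset] at hd
    have hd' : ∀ i, a i ≤ d i ∧ d i ≤ c i := fun i => Finset.mem_Icc.mp (hd i)
    have hcond : ∀ j : Fin (m+1), c j.castSucc < d j.succ := by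
      intro j
      have h2 : c j.castSucc + 1 ≤ a j.succ := by rw [has]; omega
      have h3 := (hd' j.succ).1
      omega
    rw [brkT_succ, if_pos hcond, Finset.prod_mul_distrib, Finset.prod_pow_eq_pow_sum]
  have hps := Finset.prod_univ_sum (fun i => Finset.Icc (a i) (c i))
    (fun i x => brk (c i) x * (1 - X : Polynomial ℚ) ^ (x - b i))
  rw [Finset.sum_congr rfl hterm, ← hps]
  have hcoord : ∀ i : Fin (m+2),
      (∑ x ∈ Finset.Icc (a i) (c i), brk (c i) x * (1 - X : Polynomial ℚ) ^ (x - b i)) =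
      (1 - X) ^ (a i - b i) := by
    intro i
    exact keyL (c i - a i) (b i) (a i) (c i) (by have := hac i; omega) (hba i)
  rw [Finset.prod_congr rfl (fun i _ => hcoord i), Fin.prod_univ_succ]
  have h0 : a 0 - b 0 = 0 := by rw [ha0]; omega
  rw [h0, pow_zero, one_mul]
  apply Finset.prod_congr rfl
  intro j _
  congr 1
  rw [has]
  omega

lemma partB (m : ℕ) (b c : Fin (m + 2) → ℕ) (hb : StrictMono b) (hc : StrictMono c)
    (hb1 : ∀ i, 1 ≤ b i) (hbc : ∀ i, b i ≤ c i) :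
    (∑ d ∈ (Finset.Icc (fun _ => 1) c).filter (fun d => ∀ i j, i < j → d i < d j),
        brkT d b * (1 - X) ^ (∑ i, (c i - d i))) =
      ∏ i : Fin (m + 1), (1 - X) ^ (c i.castSucc + 1 - b i.succ) := by
  set u : Fin (m+2) → ℕ :=
    Fin.lastCases (c (Fin.last (m+1))) (fun j => min (c j.castSucc) (b j.succ - 1)) with hu
  have hul : u (Fin.last (m+1)) = c (Fin.last (m+1)) := by simp [hu]
  have hus : ∀ j : Fin (m+1), u j.castSucc = min (c j.castSucc) (b j.succ - 1) := by
    intro j; simp [hu]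
  have hbu : ∀ i, b i ≤ u i := by
    intro i
    rcases Fin.eq_castSucc_or_eq_last i with ⟨j, hj⟩ | h0
    · subst hj
      rw [hus]
      have h1 := hbc j.castSucc
      have h2 := hb (Fin.castSucc_lt_succ : j.castSucc < j.succ)
      omega
    · subst h0
      rw [hul]
      exact hbc _
  have huc : ∀ i, u i ≤ c i := by
    intro i
    rcases Fin.eq_castSucc_or_eq_last i with ⟨j, hj⟩ | h0
    · subst hj; rw [hus]; exact min_le_left _ _
    · subst h0; rw [hul]
  have hsub : Fintype.piFinset (fun i => Finset.Icc (b i) (u i)) ⊆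
      (Finset.Icc (fun _ => 1) c).filter (fun d => ∀ i j, i < j → d i < d j) := by
    intro d hd
    rw [Fintype.mem_piFinset] at hd
    have hd' : ∀ i, b i ≤ d i ∧ d i ≤ u i := fun i => Finset.mem_Icc.mp (hd i)
    rw [Finset.mem_filter, Finset.mem_Icc]
    refine ⟨⟨fun i => le_trans (hb1 i) (hd' i).1,
        fun i => le_trans (hd' i).2 (huc i)⟩, ?_⟩
    have hmono : StrictMono d := by
      rw [Fin.strictMono_iff_lt_succ]
      intro j
      have h1 := (hd' j.castSucc).2
      rw [hus] at h1
      have h2 := (hd' j.succ).1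
      have h3 := hb1 j.succ
      omega
    exact fun i j h => hmono h
  have hvan : ∀ d ∈ (Finset.Icc (fun _ => 1) c).filter (fun d => ∀ i j, i < j → d i < d j),
      d ∉ Fintype.piFinset (fun i => Finset.Icc (b i) (u i)) →
      brkT d b * (1 - X : Polynomial ℚ) ^ (∑ i, (c i - d i)) = 0 := by
    intro d hd hnd
    rw [Finset.mem_filter, Finset.mem_Icc] at hd
    have hdc : ∀ i, d i ≤ c i := hd.1.2
    rw [Fintype.mem_piFinset] at hnd
    push_neg at hnd
    obtain ⟨i, hi⟩ := hnd
    rw [Finset.mem_Icc] at hi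
    rcases lt_or_ge (d i) (b i) with hlt | hge
    · rw [brkT_eq_zero_of d b i hlt, zero_mul]
    · have hgt : u i < d i := by
        by_contra h
        push_neg at h
        exact hi ⟨hge, h⟩
      have hzero : brkT d b = 0 := by
        rcases Fin.eq_castSucc_or_eq_last i with ⟨j, hj⟩ | h0
        · subst hj
          rw [hus] at hgt
          have h1 := hdc j.castSucc
          rw [brkT_succ, if_neg]
          push_neg
          exact ⟨j, by omega⟩
        · subst h0
          rw [hul] at hgt
          exact absurd (hdc (Fin.last (m+1))) (by omega)
      rw [hzero, zero_mul]
  rw [← Finset.sum_subset hsub hvan]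
  have hterm : ∀ d ∈ Fintype.piFinset (fun i => Finset.Icc (b i) (u i)),
      brkT d b * (1 - X : Polynomial ℚ) ^ (∑ i, (c i - d i)) =
      ∏ i, (brk (d i) (b i) * (1 - X) ^ (c i - d i)) := by
    intro d hd
    rw [Fintype.mem_piFinset] at hd
    have hd' : ∀ i, b i ≤ d i ∧ d i ≤ u i := fun i => Finset.mem_Icc.mp (hd i)
    have hcond : ∀ j : Fin (m+1), d j.castSucc < b j.succ := by
      intro j
      have h1 := (hd' j.castSucc).2
      rw [hus] at h1
      have h3 := hb1 j.succ
      omega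
    rw [brkT_succ, if_pos hcond, Finset.prod_mul_distrib, Finset.prod_pow_eq_pow_sum]
  have hps := Finset.prod_univ_sum (fun i => Finset.Icc (b i) (u i))
    (fun i x => brk x (b i) * (1 - X : Polynomial ℚ) ^ (c i - x))
  rw [Finset.sum_congr rfl hterm, ← hps]
  have hcoord : ∀ i : Fin (m+2),
      (∑ x ∈ Finset.Icc (b i) (u i), brk x (b i) * (1 - X : Polynomial ℚ) ^ (c i - x)) =
      (1 - X) ^ (c i - u i) := by
    intro i
    exact keyR (b i) (c i) (u i) (hbu i) (huc i)
  rw [Finset.prod_congr rfl (fun i _ => hcoord i), Fin.prod_univ_castSucc]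
  have hlast : c (Fin.last (m+1)) - u (Fin.last (m+1)) = 0 := by rw [hul]; omega
  rw [hlast, pow_zero, mul_one]
  apply Finset.prod_congr rfl
  intro j _
  congr 1
  rw [hus]
  have := hb1 j.succ
  omega


/-- Lemma 2.4: for strictly increasing `l`-tuples (`l = m + 2 ≥ 2`) of positive integers
`b`, `c`, the two bracket sums agree:
`∑_{d ≥ b, d ∈ S_l} [c; d] (1-t)^{∑(dᵢ-bᵢ)} = ∑_{d ≤ c, d ∈ S_l} [d; b] (1-t)^{∑(cᵢ-dᵢ)}`
(all terms with some `dᵢ > cᵢ`, resp. `dᵢ < bᵢ`, vanish, so the sums below are the full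
sums), and when `b ≤ c` componentwise both are `∏_{i=2}^{l} (1-t)^{max(0, c_{i-1}-bᵢ+1)}`. -/
theorem sum_brkT_eq (m : ℕ) (b c : Fin (m + 2) → ℕ)
    (hb : StrictMono b) (hc : StrictMono c)
    (hb1 : ∀ i, 1 ≤ b i) (hc1 : ∀ i, 1 ≤ c i) :
    (∑ d ∈ (Finset.Icc b c).filter (fun d => ∀ i j, i < j → d i < d j),
        brkT c d * (1 - X) ^ (∑ i, (d i - b i))) =
      (∑ d ∈ (Finset.Icc (fun _ => 1) c).filter (fun d => ∀ i j, i < j → d i < d j),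
        brkT d b * (1 - X) ^ (∑ i, (c i - d i))) ∧
    ((∀ i, b i ≤ c i) →
      (∑ d ∈ (Finset.Icc b c).filter (fun d => ∀ i j, i < j → d i < d j),
          brkT c d * (1 - X) ^ (∑ i, (d i - b i))) =
        ∏ i : Fin (m + 1), (1 - X) ^ (c i.castSucc + 1 - b i.succ)) := by

  constructor
  · by_cases hbc : ∀ i, b i ≤ c i
    · rw [partA m b c hb hc hbc, partB m b c hb hc hb1 hbc]
    · push_neg at hbc
      obtain ⟨i, hi⟩ := hbc
      have hL : Finset.Icc b c = ∅ := Finset.Icc_eq_empty (by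
        intro h
        exact absurd (h i : b i ≤ c i) (not_le.mpr hi))
      rw [hL]
      simp only [Finset.filter_empty, Finset.sum_empty]
      symm
      apply Finset.sum_eq_zero
      intro d hd
      rw [Finset.mem_filter, Finset.mem_Icc] at hd
      have hdc : ∀ j, d j ≤ c j := hd.1.2
      rw [brkT_eq_zero_of d b i (lt_of_le_of_lt (hdc i) hi), zero_mul]
  · exact partA m b c hb hc
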